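/- Let $k\ge 1$, $0\le \ell\le d$, and $0\le i_1<\cdots<i_k<\ell$. Then $\Diamond(\Gamma_{i_1},\ldots,\Gamma_{i_k},\Gamma_\ell)$ is isomorphic to $\Diamond(\Gamma_{i_1},\ldots,\Gamma_{i_k},\Gamma_{\ell+1},\ldots,\Gamma_{d+1})$, and the isomorphism is induced by the vertex map $\psi_\ell$ switching $\ell$ and $v_\ell$ and fixing all other vertices. -/
import Mathlib


namespace Paper

/-- Ambient vertex type in dimension `d`: original vertices `0,…,d+1` (left)
and new vertices `v_0,…,v_d` (right). -/
abbrev V (d : ℕ) := Sum (Fin (d+2)) (Fin (d+1))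

def origV (d m : ℕ) : V d := Sum.inl ⟨m % (d+2), Nat.mod_lt m (by omega)⟩
def newV (d m : ℕ) : V d := Sum.inr ⟨m % (d+1), Nat.mod_lt m (by omega)⟩

variable {W : Type*} [DecidableEq W] {W' : Type*} [DecidableEq W']

def IsComplex (Δ : Set (Finset W)) : Prop := ∀ F ∈ Δ, ∀ G, G ⊆ F → G ∈ Δ

def isFacet (Δ : Set (Finset W)) (F : Finset W) : Prop :=
  F ∈ Δ ∧ ∀ G ∈ Δ, F ⊆ G → G = F

def simplexOn (A : Finset W) : Set (Finset W) := {F | F ⊆ A}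

def bdrySimplex (A : Finset W) : Set (Finset W) := {F | F ⊂ A}

def joinC (Δ Γ : Set (Finset W)) : Set (Finset W) := {s | ∃ a ∈ Δ, ∃ b ∈ Γ, s = a ∪ b}

def lkC (Δ : Set (Finset W)) (F : Finset W) : Set (Finset W) :=
  {G | Disjoint F G ∧ F ∪ G ∈ Δ}

def delFace (Δ : Set (Finset W)) (F : Finset W) : Set (Finset W) := {G ∈ Δ | ¬ F ⊆ G}

/-- Stellar subdivision at `F` with new vertex `v`. -/
def sdC (v : W) (F : Finset W) (Δ : Set (Finset W)) : Set (Finset W) :=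
  delFace Δ F ∪ joinC (simplexOn {v}) (joinC (bdrySimplex F) (lkC Δ F))

/-- Deletion of a subcomplex: the complex generated by the facets of `Δ`
that are not facets of `Γ`. -/
def delSub (Δ Γ : Set (Finset W)) : Set (Finset W) :=
  {G | ∃ F, isFacet Δ F ∧ ¬ isFacet Γ F ∧ G ⊆ F}

def IsInduced (Γ Δ : Set (Finset W)) : Prop :=
  Γ ⊆ Δ ∧ ∀ F ∈ Δ, (∀ v ∈ F, ({v} : Finset W) ∈ Γ) → F ∈ Γ

/-- Simplicial isomorphism (via a permutation of the ambient vertex set). -/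
def IsoC (Δ Γ : Set (Finset W)) : Prop :=
  ∃ e : Equiv.Perm W, ∀ F : Finset W, F ∈ Δ ↔ F.image (⇑e) ∈ Γ

def mapC (f : W → W') (Δ : Set (Finset W)) : Set (Finset W') := {F | ∃ G ∈ Δ, F = G.image f}

/-- Number of faces of cardinality `i` (i.e. dimension `i-1`). -/
noncomputable def fnum (Δ : Set (Finset W)) (i : ℕ) : ℕ := {F | F ∈ Δ ∧ F.card = i}.ncard

/-- `h`-numbers of a `d`-dimensional complex. -/
noncomputable def hnum (d : ℕ) (Δ : Set (Finset W)) (j : ℕ) : ℤ :=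
  ∑ i ∈ Finset.range (j+1),
    (-1 : ℤ)^(j-i) * ((d+1-i).choose (d+1-j) : ℤ) * (fnum Δ i : ℤ)

/-- `R` is the restriction face of the `i`-th facet of the ordering `L`. -/
def IsRestriction (L : List (Finset W)) (i : ℕ) (R : Finset W) : Prop :=
  R ⊆ L.getD i ∅ ∧ (∀ j < i, ¬ R ⊆ L.getD j ∅) ∧
    ∀ G ⊆ L.getD i ∅, (∀ j < i, ¬ G ⊆ L.getD j ∅) → R ⊆ G

def IsShelling (Δ : Set (Finset W)) (L : List (Finset W)) : Prop :=
  L.Nodup ∧ (∀ F, F ∈ L ↔ isFacet Δ F) ∧ ∀ i < L.length, ∃ R, IsRestriction L i R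

def Shellable (Δ : Set (Finset W)) : Prop := ∃ L, IsShelling Δ L

def IsRelRestriction (Sg : Set (Finset W)) (L : List (Finset W)) (i : ℕ) (R : Finset W) : Prop :=
  R ⊆ L.getD i ∅ ∧ R ∉ Sg ∧ (∀ j < i, ¬ R ⊆ L.getD j ∅) ∧
    ∀ G ⊆ L.getD i ∅, G ∉ Sg → (∀ j < i, ¬ G ⊆ L.getD j ∅) → R ⊆ G

/-- Shelling of the relative complex `(Δ, Sg)`. -/
def IsRelShelling (Δ Sg : Set (Finset W)) (L : List (Finset W)) : Prop :=
  L.Nodup ∧ (∀ F, F ∈ L ↔ (isFacet Δ F ∧ F ∉ Sg)) ∧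
    ∀ i < L.length, ∃ R, IsRelRestriction Sg L i R

/-- The facet of the `(d+1)`-simplex on `{0,…,d+1}` omitting vertex `i`. -/
def Gface (d i : ℕ) : Finset (V d) :=
  ((Finset.range (d+2)).filter (fun j => j ≠ i)).image (origV d)

def GammaC (d i : ℕ) : Set (Finset (V d)) := simplexOn (Gface d i)

def GammaU (d : ℕ) (I : Finset ℕ) : Set (Finset (V d)) := {F | ∃ i ∈ I, F ⊆ Gface d i}

/-- The face `F_i = {i+1,…,d+1}` subdivided by the diamond operation. -/
def Fsub (d i : ℕ) : Finset (V d) := (Finset.Ioc i (d+1)).image (origV d)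

/-- The diamond operation: successive stellar subdivisions at `F_0, F_1, …, F_d`
with new vertices `v_0,…,v_d` (subdivision at a non-face has no effect). -/
def Diam (d : ℕ) (Δ : Set (Finset (V d))) : Set (Finset (V d)) :=
  (List.range (d+1)).foldl (fun Γ i => sdC (newV d i) (Fsub d i) Γ) Δ

def DiamU (d : ℕ) (I : Finset ℕ) : Set (Finset (V d)) := Diam d (GammaU d I)

/-- Boundary complex of the cross-polytope on the vertex pairs `{j, v_j}`, `j ∈ S`. -/
def crossN (d : ℕ) (S : Finset ℕ) : Set (Finset (V d)) :=
  {F | (∀ x ∈ F, ∃ j ∈ S, x = origV d j ∨ x = newV d j) ∧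
       ∀ j ∈ S, ¬ (origV d j ∈ F ∧ newV d j ∈ F)}

/-- Boundary complex: generated by the faces of cardinality `n` contained in
exactly one facet. -/
def bdryC (n : ℕ) (Δ : Set (Finset W)) : Set (Finset W) :=
  {G | ∃ F, G ⊆ F ∧ F ∈ Δ ∧ F.card = n ∧ ∃! H, isFacet Δ H ∧ F ⊆ H}

/-- Positions in `P` at which `G` differs from the reference facet `F0`. -/
def diffSet (d : ℕ) (P : Finset ℕ) (F0 G : Finset (V d)) : Finset ℕ :=
  P.filter (fun j => decide (origV d j ∈ G) ≠ decide (origV d j ∈ F0))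

/-- Degree lexicographic comparison of characteristic (difference) sets. -/
def dlexLT (D D' : Finset ℕ) : Prop :=
  D.card < D'.card ∨
    (D.card = D'.card ∧ ∃ m, m ∉ D ∧ m ∈ D' ∧ ∀ j < m, (j ∈ D ↔ j ∈ D'))

/-- `L` lists the facets of `Δ` in degree lexicographic order w.r.t. `F0`. -/
def IsDegLexOrder (d : ℕ) (P : Finset ℕ) (Δ : Set (Finset (V d)))
    (F0 : Finset (V d)) (L : List (Finset (V d))) : Prop :=
  L.Nodup ∧ (∀ F, F ∈ L ↔ isFacet Δ F) ∧
    L.Pairwise (fun G G' => dlexLT (diffSet d P F0 G) (diffSet d P F0 G'))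

/-- Vertices of `F` sitting at the positions in `D`. -/
def posVerts (d : ℕ) (F : Finset (V d)) (D : Finset ℕ) : Finset (V d) :=
  F.filter (fun x => ∃ j ∈ D, x = origV d j ∨ x = newV d j)

def IsoN (Δ Γ : Set (Finset ℕ)) : Prop :=
  ∃ e : Equiv.Perm ℕ, ∀ F : Finset ℕ, F ∈ Δ ↔ F.image (⇑e) ∈ Γ

def StellarMove (Δ Γ : Set (Finset ℕ)) : Prop :=
  ∃ (F : Finset ℕ) (v : ℕ), F ∈ Δ ∧ F ≠ ∅ ∧ (∀ G ∈ Δ, v ∉ G) ∧ Γ = sdC v F Δ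

/-- PL homeomorphism of simplicial complexes, encoded via Alexander's theorem as
stellar equivalence: the equivalence relation generated by stellar subdivisions
(and their inverses, the welds) together with simplicial isomorphisms. -/
def PLHomeo (Δ Γ : Set (Finset ℕ)) : Prop :=
  Relation.EqvGen (fun A B => StellarMove A B ∨ IsoN A B) Δ Γ

def encV (d : ℕ) : V d → ℕ := Sum.elim (fun j => 2 * j.val) (fun j => 2 * j.val + 1)

def toN (d : ℕ) (Δ : Set (Finset (V d))) : Set (Finset ℕ) := mapC (encV d) Δ

def ballN (c : ℕ) : Set (Finset ℕ) := {F | F ⊆ Finset.range c}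

def sphereN (c : ℕ) : Set (Finset ℕ) := {F | F ⊂ Finset.range (c+1)}

/-- `Δ` is a combinatorial ball of dimension `c-1` (a `(c-1)`-simplex has `c` vertices). -/
def IsCombBall (d c : ℕ) (Δ : Set (Finset (V d))) : Prop := PLHomeo (toN d Δ) (ballN c)

/-- `Δ` is a combinatorial sphere of dimension `c-1`. -/
def IsCombSphere (d c : ℕ) (Δ : Set (Finset (V d))) : Prop := PLHomeo (toN d Δ) (sphereN c)

def ConnC (Δ : Set (Finset W)) : Prop :=
  ∀ u v : W, ({u} : Finset W) ∈ Δ → ({v} : Finset W) ∈ Δ →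
    Relation.ReflTransGen (fun a b => ({a, b} : Finset W) ∈ Δ) u v

/-- Combinatorial `d`-manifold (possibly with boundary): connected, pure, and all
links of nonempty faces are combinatorial balls or spheres of dimension `d - |F|`. -/
def IsCombManifold (d : ℕ) (Δ : Set (Finset (V d))) : Prop :=
  IsComplex Δ ∧ (∅ : Finset (V d)) ∈ Δ ∧ ConnC Δ ∧
  (∀ F ∈ Δ, ∃ G, isFacet Δ G ∧ F ⊆ G ∧ G.card = d+1) ∧
  ∀ F ∈ Δ, F ≠ (∅ : Finset (V d)) →
    (IsCombBall d (d+1-F.card) (lkC Δ F) ∨ IsCombSphere d (d+1-F.card) (lkC Δ F))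

def liftV (d : ℕ) : V d → V (d+1) := Sum.map Fin.castSucc Fin.castSucc

/-- The relabeling `π : i ↦ i+1`, `v_i ↦ v_{i+1}`. -/
def piV (d : ℕ) : V d → V (d+1) := Sum.map Fin.succ Fin.succ

/-- The relabeling `ρ : i ↦ i-1`, `v_i ↦ v_{i-1}` (indices mod `d+1`). -/
def rhoV (d : ℕ) : V d → V d := fun x =>
  match x with
  | Sum.inl j => origV d ((j.val + d) % (d+1))
  | Sum.inr j => newV d ((j.val + d) % (d+1))

/-- `ψ` swaps the vertices `d` and `v_d`. -/
def psiV (d : ℕ) : V d → V d := fun x => Equiv.swap (origV d d) (newV d d) x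

def sigmaV (d : ℕ) : V d → V d := psiV d ∘ rhoV d

/-- `Δ` is (isomorphic to) the boundary complex of the `(d+1)`-dimensional
cross-polytope. -/
def IsCrossBdry (d : ℕ) (Δ : Set (Finset W)) : Prop :=
  ∃ f : Fin (d+1) × Bool → W, Function.Injective f ∧
    Δ = {F | (∀ v ∈ F, ∃ p, v = f p) ∧
             ∀ j : Fin (d+1), ¬ (f (j, true) ∈ F ∧ f (j, false) ∈ F)}

/-- `Sg` is a connected sum of `Δ` and `Γ`: they meet exactly in the full simplex
on a common facet `F`, which is removed. -/
def IsConnSum (Δ Γ Sg : Set (Finset W)) : Prop :=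
  ∃ F : Finset W, isFacet Δ F ∧ isFacet Γ F ∧ Δ ∩ Γ = simplexOn F ∧ Sg = (Δ ∪ Γ) \ {F}

/-- Connected sum of `m+1` copies of the boundary of the `(d+1)`-cross-polytope. -/
def IsCrossStacked (d : ℕ) : ℕ → Set (Finset W) → Prop
  | 0, Δ => IsCrossBdry d Δ
  | (m+1), Δ => ∃ A B : Set (Finset W), IsCrossStacked d m A ∧ IsCrossBdry d B ∧ IsConnSum A B Δ

/-- The initial facet of the block `Diam(Γ_{iℓ})` (for block index `ℓ ≥ 1`;
block `0` uses the facet `G0` meeting the boundary). -/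
def initFacet (d i1 iℓ : ℕ) (G0 : Finset (V d)) (ℓ : ℕ) : Finset (V d) :=
  if ℓ = 0 then G0
  else ((Finset.range iℓ).image (origV d)) ∪ {newV d iℓ} ∪
       ((Finset.Ioo iℓ (max i1 iℓ)).image (origV d)) ∪
       ((Finset.Icc (max i1 iℓ) d).image (newV d))


/-! ### Auxiliary development for stmt5 -/

section Stmt5Aux

variable {d : ℕ}

lemma origV_eq {m : ℕ} (h : m < d+2) : origV d m = Sum.inl ⟨m, h⟩ := by
  simp [origV, Nat.mod_eq_of_lt h]

lemma newV_eq {m : ℕ} (h : m < d+1) : newV d m = Sum.inr ⟨m, h⟩ := by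
  simp [newV, Nat.mod_eq_of_lt h]

lemma mem_Gface {x : V d} {i : ℕ} :
    x ∈ Gface d i ↔ ∃ a : Fin (d+2), x = Sum.inl a ∧ a.val ≠ i := by
  constructor
  · intro hx
    rcases Finset.mem_image.1 hx with ⟨j, hj, rfl⟩
    simp only [Finset.mem_filter, Finset.mem_range] at hj
    exact ⟨⟨j, hj.1⟩, by rw [origV_eq hj.1], hj.2⟩
  · rintro ⟨a, rfl, ha⟩
    refine Finset.mem_image.2 ⟨a.val, ?_, by rw [origV_eq a.isLt]⟩
    simp only [Finset.mem_filter, Finset.mem_range]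
    exact ⟨a.isLt, ha⟩

lemma mem_Fsub {x : V d} {t : ℕ} :
    x ∈ Fsub d t ↔ ∃ a : Fin (d+2), x = Sum.inl a ∧ t < a.val := by
  constructor
  · intro hx
    rcases Finset.mem_image.1 hx with ⟨j, hj, rfl⟩
    rcases Finset.mem_Ioc.1 hj with ⟨h1, h2⟩
    exact ⟨⟨j, by omega⟩, by rw [origV_eq (by omega)], h1⟩
  · rintro ⟨a, rfl, ha⟩
    refine Finset.mem_image.2 ⟨a.val, Finset.mem_Ioc.2 ⟨ha, by omega⟩, by rw [origV_eq a.isLt]⟩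

/-- Faces of the intermediate complex `B_i^t`. -/
def memB (d i t : ℕ) (F : Finset (V d)) : Prop :=
  (∀ x ∈ F, (∃ a : Fin (d+2), x = Sum.inl a ∧ a.val ≠ i) ∨
            (∃ b : Fin (d+1), x = Sum.inr b ∧ ((b.val = i ∧ i < t) ∨ (i < b.val ∧ b.val < t)))) ∧
  (∀ (a : Fin (d+2)) (b : Fin (d+1)), a.val = b.val → i < a.val → a.val < t →
      ¬(Sum.inl a ∈ F ∧ Sum.inr b ∈ F)) ∧
  (∃ j : Fin (d+2), t ≤ j.val ∧ Sum.inl j ∉ F)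

lemma sdC_noop {W : Type*} [DecidableEq W] {Δ : Set (Finset W)} {v : W} {F : Finset W}
    (hc : ∀ G ∈ Δ, ∀ H, H ⊆ G → H ∈ Δ) (hF : F ∉ Δ) : sdC v F Δ = Δ := by
  ext G
  simp only [sdC, delFace, joinC, lkC, Set.mem_union, Set.mem_setOf_eq, Set.mem_sep_iff]
  constructor
  · rintro (⟨h, _⟩ | ⟨a, ha, s, ⟨b, hb, c, ⟨hdisj, hFc⟩, rfl⟩, rfl⟩)
    · exact h
    · exact absurd (hc _ hFc F Finset.subset_union_left) hF
  · intro h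
    exact Or.inl ⟨h, fun hsub => hF (hc _ h _ hsub)⟩

lemma sdC_exists {W : Type*} [DecidableEq W] {ι : Type*} (v : W) (F : Finset W)
    (s : Set ι) (B : ι → Set (Finset W)) :
    sdC v F {G | ∃ i ∈ s, G ∈ B i} = {G | ∃ i ∈ s, G ∈ sdC v F (B i)} := by
  ext G
  simp only [sdC, delFace, joinC, lkC, Set.mem_union, Set.mem_setOf_eq, Set.mem_sep_iff]
  constructor
  · rintro (⟨⟨i, his, hi⟩, hns⟩ | ⟨a, ha, s', ⟨b, hb, c, ⟨hdisj, i, his, hFc⟩, rfl⟩, rfl⟩)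
    · exact ⟨i, his, Or.inl ⟨hi, hns⟩⟩
    · exact ⟨i, his, Or.inr ⟨a, ha, b ∪ c, ⟨b, hb, c, ⟨hdisj, hFc⟩, rfl⟩, rfl⟩⟩
  · rintro ⟨i, his, (⟨hi, hns⟩ | ⟨a, ha, s', ⟨b, hb, c, ⟨hdisj, hFc⟩, rfl⟩, rfl⟩)⟩
    · exact Or.inl ⟨⟨i, his, hi⟩, hns⟩
    · exact Or.inr ⟨a, ha, b ∪ c, ⟨b, hb, c, ⟨hdisj, i, his, hFc⟩, rfl⟩, rfl⟩

lemma foldl_sd_exists {ι : Type*} (L : List ℕ) (s : Set ι) (B : ι → Set (Finset (V d))) :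
    L.foldl (fun Γ i => sdC (newV d i) (Fsub d i) Γ) {G | ∃ i ∈ s, G ∈ B i}
      = {G | ∃ i ∈ s, G ∈ L.foldl (fun Γ i => sdC (newV d i) (Fsub d i) Γ) (B i)} := by
  induction L generalizing B with
  | nil => simp
  | cons a L ih =>
      simp only [List.foldl_cons]
      rw [sdC_exists, ih (fun i => sdC (newV d a) (Fsub d a) (B i))]

lemma memB_self {i : ℕ} (hi : i ≤ d+1) (F : Finset (V d)) :
    memB d i i F ↔ F ∈ GammaC d i := by
  simp only [GammaC, simplexOn, Set.mem_setOf_eq, memB]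
  constructor
  · rintro ⟨hv, -, -⟩ x hx
    rcases hv x hx with ⟨a, rfl, ha⟩ | ⟨b, rfl, hb⟩
    · exact mem_Gface.2 ⟨a, rfl, ha⟩
    · omega
  · intro hsub
    refine ⟨fun x hx => ?_, fun a b hab h1 h2 => by omega, ⟨⟨i, by omega⟩, le_refl _, fun h => ?_⟩⟩
    · rcases mem_Gface.1 (hsub hx) with ⟨a, rfl, ha⟩
      exact Or.inl ⟨a, rfl, ha⟩
    · rcases mem_Gface.1 (hsub h) with ⟨a, ha, ha'⟩
      rw [Sum.inl.injEq] at ha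
      exact ha' (by rw [← ha])


lemma sdC_memB_step {i t : ℕ} (hit : i ≤ t) (htd : t ≤ d) :
    sdC (newV d t) (Fsub d t) {F | memB d i t F} = {F | memB d i (t+1) F} := by
  have htd1 : t < d + 1 := by omega
  have htd2 : t < d + 2 := by omega
  rw [newV_eq htd1]
  ext G
  simp only [sdC, delFace, joinC, lkC, simplexOn, bdrySimplex, memB, Set.mem_union,
    Set.mem_setOf_eq, Set.mem_sep_iff]
  constructor
  · rintro (⟨⟨hv, hcr, hc3⟩, hns⟩ | ⟨a, ha, s, ⟨b, hb, c, ⟨hdisj, hv, hcr, hc3⟩, rfl⟩, rfl⟩)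
    · refine ⟨fun x hx => ?_, fun a b hab h1 h2 hmem => ?_, ?_⟩
      · rcases hv x hx with ⟨a, rfl, hane⟩ | ⟨b, rfl, hbc⟩
        · exact Or.inl ⟨a, rfl, hane⟩
        · exact Or.inr ⟨b, rfl, by omega⟩
      · rcases Nat.lt_or_ge a.val t with hlt | hge
        · exact hcr a b hab h1 hlt hmem
        · rcases hv _ hmem.2 with ⟨a', heq, -⟩ | ⟨b', heq, hbc⟩
          · simp at heq
          · rw [Sum.inr.injEq] at heq
            subst heq
            omega
      · rcases Finset.not_subset.1 hns with ⟨x, hxF, hxG⟩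
        rcases mem_Fsub.1 hxF with ⟨a, rfl, hat⟩
        exact ⟨a, by omega, hxG⟩
    · -- G = a ∪ (b ∪ c)
      have hmemG : ∀ x, x ∈ a ∪ (b ∪ c) ↔ x ∈ a ∨ x ∈ b ∨ x ∈ c := by
        intro x; simp [Finset.mem_union]
      have horigt_notc : Sum.inl (⟨t, htd2⟩ : Fin (d+2)) ∉ c := by
        rcases hc3 with ⟨j, hjt, hjn⟩
        rcases Nat.lt_or_ge t j.val with hlt | hge
        · exact absurd (Finset.mem_union_left c (mem_Fsub.2 ⟨j, rfl, hlt⟩)) hjn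
        · have hj : j = (⟨t, htd2⟩ : Fin (d+2)) := Fin.ext (show j.val = t by omega)
          subst hj
          exact fun hc => hjn (Finset.mem_union_right _ hc)
      refine ⟨fun x hx => ?_, fun a' b' hab h1 h2 hmem => ?_, ?_⟩
      · rcases (hmemG x).1 hx with hxa | hxb | hxc
        · have hx' : x = Sum.inr (⟨t, htd1⟩ : Fin (d+1)) := Finset.mem_singleton.1 (ha hxa)
          subst hx'
          have hcond : (t = i ∧ i < t+1) ∨ (i < t ∧ t < t+1) := by omega
          exact Or.inr ⟨⟨t, htd1⟩, rfl, hcond⟩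
        · rcases mem_Fsub.1 (hb.subset hxb) with ⟨a', rfl, hat⟩
          exact Or.inl ⟨a', rfl, by omega⟩
        · rcases hv x (Finset.mem_union_right _ hxc) with ⟨a', rfl, hane⟩ | ⟨b', rfl, hbc⟩
          · exact Or.inl ⟨a', rfl, hane⟩
          · exact Or.inr ⟨b', rfl, by omega⟩
      · rcases Nat.lt_or_ge a'.val t with hlt | hge
        · -- a'.val < t : both vertices must lie in c
          have hinr : Sum.inr b' ∈ c := by
            rcases (hmemG _).1 hmem.2 with hxa | hxb | hxc
            · have heq := Finset.mem_singleton.1 (ha hxa)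
              rw [Sum.inr.injEq] at heq
              have hbt : b'.val = t := by rw [heq]
              exact absurd hbt (by omega)
            · rcases mem_Fsub.1 (hb.subset hxb) with ⟨a'', heq, -⟩
              simp at heq
            · exact hxc
          have hinl : Sum.inl a' ∈ c := by
            rcases (hmemG _).1 hmem.1 with hxa | hxb | hxc
            · have heq := Finset.mem_singleton.1 (ha hxa)
              simp at heq
            · rcases mem_Fsub.1 (hb.subset hxb) with ⟨a'', heq, ha''⟩
              rw [Sum.inl.injEq] at heq
              subst heq
              exact absurd ha'' (by omega)
            · exact hxc
          exact hcr a' b' hab h1 hlt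
            ⟨Finset.mem_union_right _ hinl, Finset.mem_union_right _ hinr⟩
        · -- a'.val = t : but orig t is not in G
          have hat : a' = (⟨t, htd2⟩ : Fin (d+2)) := Fin.ext (show a'.val = t by omega)
          subst hat
          rcases (hmemG _).1 hmem.1 with hxa | hxb | hxc
          · have heq := Finset.mem_singleton.1 (ha hxa)
            simp at heq
          · rcases mem_Fsub.1 (hb.subset hxb) with ⟨a'', heq, ha''⟩
            rw [Sum.inl.injEq] at heq
            have : a''.val = t := by rw [← heq]
            omega
          · exact horigt_notc hxc
      · rcases Finset.exists_of_ssubset hb with ⟨x, hxF, hxb⟩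
        rcases mem_Fsub.1 hxF with ⟨a', rfl, hat⟩
        refine ⟨a', by omega, fun hmem => ?_⟩
        rcases (hmemG _).1 hmem with hxa | hxb' | hxc
        · have heq := Finset.mem_singleton.1 (ha hxa)
          simp at heq
        · exact hxb hxb'
        · exact (Finset.disjoint_left.1 hdisj (mem_Fsub.2 ⟨a', rfl, hat⟩)) hxc
  · rintro ⟨hv, hcr, hc3⟩
    by_cases hvtG : Sum.inr (⟨t, htd1⟩ : Fin (d+1)) ∈ G
    · -- G contains the new vertex: decompose
      have horigt_notG : Sum.inl (⟨t, htd2⟩ : Fin (d+2)) ∉ G := by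
        rcases Nat.lt_or_ge i t with hlt | hge
        · intro hmem
          exact hcr ⟨t, htd2⟩ ⟨t, htd1⟩ rfl hlt (show t < t+1 by omega) ⟨hmem, hvtG⟩
        · intro hmem
          rcases hv _ hmem with ⟨a', heq, hane⟩ | ⟨b', heq, -⟩
          · rw [Sum.inl.injEq] at heq
            exact hane (by rw [← heq]; show t = i; omega)
          · simp at heq
      refine Or.inr ⟨{Sum.inr (⟨t, htd1⟩ : Fin (d+1))}, Finset.Subset.refl _,
        (G.filter (fun x => x ∈ Fsub d t)) ∪
          (G.filter (fun x => x ∉ Fsub d t ∧ x ≠ Sum.inr (⟨t, htd1⟩ : Fin (d+1)))),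
        ⟨G.filter (fun x => x ∈ Fsub d t), ?_,
         G.filter (fun x => x ∉ Fsub d t ∧ x ≠ Sum.inr (⟨t, htd1⟩ : Fin (d+1))),
         ⟨?_, ?_, ?_, ?_⟩, rfl⟩, ?_⟩
      · -- b ⊊ Fsub d t
        have hsub : G.filter (fun x => x ∈ Fsub d t) ⊆ Fsub d t := by
          intro x hx
          exact (Finset.mem_filter.1 hx).2
        rw [Finset.ssubset_iff_of_subset hsub]
        rcases hc3 with ⟨j, hjt, hjn⟩
        refine ⟨Sum.inl j, mem_Fsub.2 ⟨j, rfl, by omega⟩, fun hmem => ?_⟩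
        exact hjn (Finset.mem_filter.1 hmem).1
      · -- Disjoint
        rw [Finset.disjoint_left]
        intro x hx hxc
        exact (Finset.mem_filter.1 hxc).2.1 hx
      · -- verts of Fsub ∪ c
        intro x hx
        rcases Finset.mem_union.1 hx with hxF | hxc
        · rcases mem_Fsub.1 hxF with ⟨a', rfl, hat⟩
          exact Or.inl ⟨a', rfl, by omega⟩
        · rcases Finset.mem_filter.1 hxc with ⟨hxG, hxnF, hxnvt⟩
          rcases hv x hxG with ⟨a', rfl, hane⟩ | ⟨b', rfl, hbc⟩
          · exact Or.inl ⟨a', rfl, hane⟩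
          · have hbt : b'.val ≠ t := by
              intro hbt
              exact hxnvt (by rw [show b' = (⟨t, htd1⟩ : Fin (d+1)) from Fin.ext hbt])
            exact Or.inr ⟨b', rfl, by omega⟩
      · -- cross of Fsub ∪ c
        intro a' b' hab h1 h2 hmem
        have hinr : Sum.inr b' ∈ G := by
          rcases Finset.mem_union.1 hmem.2 with hxF | hxc
          · rcases mem_Fsub.1 hxF with ⟨a'', heq, -⟩
            simp at heq
          · exact (Finset.mem_filter.1 hxc).1
        have hinl : Sum.inl a' ∈ G := by
          rcases Finset.mem_union.1 hmem.1 with hxF | hxc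
          · rcases mem_Fsub.1 hxF with ⟨a'', heq, ha''⟩
            rw [Sum.inl.injEq] at heq
            subst heq
            exact absurd ha'' (by omega)
          · exact (Finset.mem_filter.1 hxc).1
        exact hcr a' b' hab h1 (by omega) ⟨hinl, hinr⟩
      · -- boundary condition for Fsub ∪ c
        refine ⟨⟨t, htd2⟩, le_refl t, fun hmem => ?_⟩
        rcases Finset.mem_union.1 hmem with hxF | hxc
        · rcases mem_Fsub.1 hxF with ⟨a'', heq, ha''⟩
          rw [Sum.inl.injEq] at heq
          have : a''.val = t := by rw [← heq]
          omega
        · exact horigt_notG (Finset.mem_filter.1 hxc).1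
      · -- G = {vt} ∪ (b ∪ c)
        ext x
        simp only [Finset.mem_union, Finset.mem_singleton, Finset.mem_filter]
        constructor
        · intro hx
          by_cases h1 : x = Sum.inr (⟨t, htd1⟩ : Fin (d+1))
          · exact Or.inl h1
          · by_cases h2 : x ∈ Fsub d t
            · exact Or.inr (Or.inl ⟨hx, h2⟩)
            · exact Or.inr (Or.inr ⟨hx, h2, h1⟩)
        · rintro (rfl | ⟨h, -⟩ | ⟨h, -⟩)
          · exact hvtG
          · exact h
          · exact h
    · -- new vertex not in G : G was already there
      refine Or.inl ⟨⟨fun x hx => ?_, fun a' b' hab h1 h2 => hcr a' b' hab h1 (by omega), ?_⟩, ?_⟩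
      · rcases hv x hx with ⟨a', rfl, hane⟩ | ⟨b', rfl, hbc⟩
        · exact Or.inl ⟨a', rfl, hane⟩
        · have hbt : b'.val ≠ t := by
            intro hbt
            apply hvtG
            rw [show (⟨t, htd1⟩ : Fin (d+1)) = b' from (Fin.ext hbt).symm]
            exact hx
          exact Or.inr ⟨b', rfl, by omega⟩
      · rcases hc3 with ⟨j, hjt, hjn⟩
        exact ⟨j, by omega, hjn⟩
      · intro hsub
        rcases hc3 with ⟨j, hjt, hjn⟩
        exact hjn (hsub (mem_Fsub.2 ⟨j, rfl, by omega⟩))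

lemma foldl_gamma {i : ℕ} (hi : i ≤ d+1) (t : ℕ) (ht : t ≤ d+1) :
    (List.range t).foldl (fun Γ j => sdC (newV d j) (Fsub d j) Γ) (GammaC d i)
      = {F | memB d i (max i t) F} := by
  induction t with
  | zero =>
      simp only [List.range_zero, List.foldl_nil, Nat.max_zero]
      ext F
      simp only [Set.mem_setOf_eq]
      exact (memB_self hi F).symm
  | succ t ih =>
      rw [List.range_succ, List.foldl_append, ih (by omega), List.foldl_cons, List.foldl_nil]
      rcases Nat.lt_or_ge t i with hti | hit
      · have hmax1 : max i t = i := Nat.max_eq_left (by omega)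
        have hmax2 : max i (t+1) = i := Nat.max_eq_left (by omega)
        rw [hmax1, hmax2]
        have hGC : {F | memB d i i F} = GammaC d i := by
          ext F
          simp only [Set.mem_setOf_eq]
          exact memB_self hi F
        rw [hGC]
        apply sdC_noop
        · intro G hG H hH
          exact Set.mem_setOf_eq ▸ (subset_trans hH hG)
        · intro hmem
          have hsub : Fsub d t ⊆ Gface d i := hmem
          have h1 : origV d i ∈ Fsub d t := by
            rw [origV_eq (show i < d+2 by omega)]
            exact mem_Fsub.2 ⟨⟨i, by omega⟩, rfl, hti⟩
          rcases mem_Gface.1 (hsub h1) with ⟨a, heq, hane⟩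
          rw [origV_eq (show i < d+2 by omega), Sum.inl.injEq] at heq
          exact hane (by rw [← heq])
      · have hmax1 : max i t = t := Nat.max_eq_right hit
        have hmax2 : max i (t+1) = t+1 := Nat.max_eq_right (by omega)
        rw [hmax1, hmax2]
        exact sdC_memB_step hit (by omega)

lemma foldl_gammaC {i : ℕ} (hi : i ≤ d+1) :
    (List.range (d+1)).foldl (fun Γ j => sdC (newV d j) (Fsub d j) Γ) (GammaC d i)
      = {F | memB d i (d+1) F} := by
  rw [foldl_gamma hi (d+1) (le_refl _), Nat.max_eq_right hi]

/-- Faces of `⋄(Γ_i)`. -/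
def memD (d i : ℕ) (F : Finset (V d)) : Prop :=
  (∀ x ∈ F, (∃ a : Fin (d+2), x = Sum.inl a ∧ a.val ≠ i ∧ a.val ≠ d+1) ∨
            (∃ b : Fin (d+1), x = Sum.inr b ∧ i ≤ b.val)) ∧
  (∀ (a : Fin (d+2)) (b : Fin (d+1)), a.val = b.val → i < a.val →
      ¬(Sum.inl a ∈ F ∧ Sum.inr b ∈ F))

lemma memD_iff {i : ℕ} (hi : i ≤ d+1) (F : Finset (V d)) :
    memB d i (d+1) F ↔ memD d i F := by
  unfold memB memD
  constructor
  · rintro ⟨hv, hcr, hc3⟩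
    refine ⟨fun x hx => ?_, fun a b hab h1 => hcr a b hab h1 (by rw [hab]; exact b.isLt)⟩
    rcases hv x hx with ⟨a, rfl, hane⟩ | ⟨b, rfl, hbc⟩
    · refine Or.inl ⟨a, rfl, hane, fun had => ?_⟩
      rcases hc3 with ⟨j, hjt, hjn⟩
      have hj2 := j.isLt
      have hja : j = a := Fin.ext (by omega)
      subst hja
      exact hjn hx
    · exact Or.inr ⟨b, rfl, by omega⟩
  · rintro ⟨hv, hcr⟩
    refine ⟨fun x hx => ?_, fun a b hab h1 h2 => hcr a b hab h1,
      ⟨⟨d+1, by omega⟩, le_refl _, fun hmem => ?_⟩⟩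
    · rcases hv x hx with ⟨a, rfl, hane, -⟩ | ⟨b, rfl, hb⟩
      · exact Or.inl ⟨a, rfl, hane⟩
      · rcases Nat.eq_or_lt_of_le hb with heq | hlt
        · exact Or.inr ⟨b, rfl, Or.inl ⟨heq.symm, lt_of_eq_of_lt heq b.isLt⟩⟩
        · exact Or.inr ⟨b, rfl, Or.inr ⟨hlt, b.isLt⟩⟩
    · rcases hv _ hmem with ⟨a, heq, -, had⟩ | ⟨b, heq, -⟩
      · rw [Sum.inl.injEq] at heq
        exact had (by rw [← heq])
      · simp at heq

lemma diamU_char (I : Finset ℕ) (hI : ∀ i ∈ I, i ≤ d+1) (F : Finset (V d)) :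
    F ∈ DiamU d I ↔ ∃ i ∈ I, memD d i F := by
  have hGU : GammaU d I = {F | ∃ i ∈ (↑I : Set ℕ), F ∈ GammaC d i} := by
    ext F
    simp [GammaU, GammaC, simplexOn]
  rw [DiamU, Diam, hGU, foldl_sd_exists]
  simp only [Set.mem_setOf_eq, Finset.mem_coe]
  constructor
  · rintro ⟨i, hiI, hF⟩
    rw [foldl_gammaC (hI i hiI)] at hF
    exact ⟨i, hiI, (memD_iff (hI i hiI) F).1 hF⟩
  · rintro ⟨i, hiI, hF⟩
    refine ⟨i, hiI, ?_⟩
    rw [foldl_gammaC (hI i hiI)]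
    exact (memD_iff (hI i hiI) F).2 hF

lemma mem_image_swap {u w : V d} {F : Finset (V d)} {x : V d} :
    x ∈ F.image (⇑(Equiv.swap u w)) ↔ Equiv.swap u w x ∈ F := by
  constructor
  · intro hx
    rcases Finset.mem_image.1 hx with ⟨y, hy, rfl⟩
    rwa [Equiv.swap_apply_self]
  · intro hx
    exact Finset.mem_image.2 ⟨_, hx, Equiv.swap_apply_self _ _ _⟩

lemma image_swap_swap {u w : V d} (F : Finset (V d)) :
    (F.image (⇑(Equiv.swap u w))).image (⇑(Equiv.swap u w)) = F := by
  ext x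
  rw [mem_image_swap, mem_image_swap, Equiv.swap_apply_self]

lemma swap_eval_inl {ℓ : ℕ} (hℓ : ℓ ≤ d) (a : Fin (d+2)) (ha : a.val ≠ ℓ) :
    Equiv.swap (origV d ℓ) (newV d ℓ) (Sum.inl a) = Sum.inl a := by
  rw [origV_eq (show ℓ < d+2 by omega), newV_eq (show ℓ < d+1 by omega)]
  apply Equiv.swap_apply_of_ne_of_ne
  · intro h
    rw [Sum.inl.injEq] at h
    exact ha (by rw [h])
  · simp

lemma swap_eval_inr {ℓ : ℕ} (hℓ : ℓ ≤ d) (b : Fin (d+1)) (hb : b.val ≠ ℓ) :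
    Equiv.swap (origV d ℓ) (newV d ℓ) (Sum.inr b) = Sum.inr b := by
  rw [origV_eq (show ℓ < d+2 by omega), newV_eq (show ℓ < d+1 by omega)]
  apply Equiv.swap_apply_of_ne_of_ne
  · simp
  · intro h
    rw [Sum.inr.injEq] at h
    exact hb (by rw [h])

lemma swap_eval_origl {ℓ : ℕ} (hℓ2 : ℓ < d+2) (hℓ1 : ℓ < d+1) :
    Equiv.swap (origV d ℓ) (newV d ℓ) (Sum.inl (⟨ℓ, hℓ2⟩ : Fin (d+2)))
      = Sum.inr (⟨ℓ, hℓ1⟩ : Fin (d+1)) := by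
  rw [← origV_eq hℓ2, ← newV_eq hℓ1]
  exact Equiv.swap_apply_left _ _

lemma swap_eval_newl {ℓ : ℕ} (hℓ2 : ℓ < d+2) (hℓ1 : ℓ < d+1) :
    Equiv.swap (origV d ℓ) (newV d ℓ) (Sum.inr (⟨ℓ, hℓ1⟩ : Fin (d+1)))
      = Sum.inl (⟨ℓ, hℓ2⟩ : Fin (d+2)) := by
  rw [← origV_eq hℓ2, ← newV_eq hℓ1]
  exact Equiv.swap_apply_right _ _

lemma memD_swap_lt {i ℓ : ℕ} (hi : i < ℓ) (hℓ : ℓ ≤ d) {F : Finset (V d)}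
    (hF : memD d i F) :
    memD d i (F.image (⇑(Equiv.swap (origV d ℓ) (newV d ℓ)))) := by
  have hℓ2 : ℓ < d + 2 := by omega
  have hℓ1 : ℓ < d + 1 := by omega
  unfold memD at hF ⊢
  obtain ⟨hv, hcr⟩ := hF
  constructor
  · intro x hx
    rw [mem_image_swap] at hx
    cases x with
    | inl a =>
        by_cases ha : a.val = ℓ
        · exact Or.inl ⟨a, rfl, by omega, by omega⟩
        · rw [swap_eval_inl hℓ a ha] at hx
          rcases hv _ hx with ⟨a', heq, h1, h2⟩ | ⟨b', heq, -⟩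
          · rw [Sum.inl.injEq] at heq
            have hval : a.val = a'.val := by rw [heq]
            exact Or.inl ⟨a, rfl, by omega, by omega⟩
          · simp at heq
    | inr b =>
        by_cases hb : b.val = ℓ
        · exact Or.inr ⟨b, rfl, by omega⟩
        · rw [swap_eval_inr hℓ b hb] at hx
          rcases hv _ hx with ⟨a', heq, -⟩ | ⟨b', heq, hb'⟩
          · simp at heq
          · rw [Sum.inr.injEq] at heq
            have hval : b.val = b'.val := by rw [heq]
            exact Or.inr ⟨b, rfl, by omega⟩
  · intro a b hab h1 hmem
    obtain ⟨hm1, hm2⟩ := hmem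
    rw [mem_image_swap] at hm1 hm2
    by_cases ha : a.val = ℓ
    · have ha' : a = (⟨ℓ, hℓ2⟩ : Fin (d+2)) := Fin.ext (show a.val = ℓ by omega)
      have hb' : b = (⟨ℓ, hℓ1⟩ : Fin (d+1)) := Fin.ext (show b.val = ℓ by omega)
      subst ha'
      subst hb'
      rw [swap_eval_origl hℓ2 hℓ1] at hm1
      rw [swap_eval_newl hℓ2 hℓ1] at hm2
      exact hcr ⟨ℓ, hℓ2⟩ ⟨ℓ, hℓ1⟩ rfl (show i < ℓ from hi) ⟨hm2, hm1⟩
    · rw [swap_eval_inl hℓ a ha] at hm1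
      rw [swap_eval_inr hℓ b (by omega)] at hm2
      exact hcr a b hab h1 ⟨hm1, hm2⟩

lemma memD_swap_ell_fwd {ℓ : ℕ} (hℓ : ℓ ≤ d) {F : Finset (V d)} (hF : memD d ℓ F) :
    ∃ j, ℓ < j ∧ j ≤ d+1 ∧ memD d j (F.image (⇑(Equiv.swap (origV d ℓ) (newV d ℓ)))) := by
  have hℓ2 : ℓ < d + 2 := by omega
  have hℓ1 : ℓ < d + 1 := by omega
  unfold memD at hF ⊢
  obtain ⟨hv, hcr⟩ := hF
  set G := F.image (⇑(Equiv.swap (origV d ℓ) (newV d ℓ))) with hG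
  have gInl : ∀ a : Fin (d+2), Sum.inl a ∈ G → a.val ≠ d+1 := by
    intro a hx
    rw [hG, mem_image_swap] at hx
    by_cases ha : a.val = ℓ
    · omega
    · rw [swap_eval_inl hℓ a ha] at hx
      rcases hv _ hx with ⟨a', heq, -, h2⟩ | ⟨b', heq, -⟩
      · rw [Sum.inl.injEq] at heq
        have hval : a.val = a'.val := by rw [heq]
        omega
      · simp at heq
  have gInr : ∀ b : Fin (d+1), Sum.inr b ∈ G → ℓ < b.val := by
    intro b hx
    rw [hG, mem_image_swap] at hx
    by_cases hb : b.val = ℓ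
    · have hb' : b = (⟨ℓ, hℓ1⟩ : Fin (d+1)) := Fin.ext (show b.val = ℓ by omega)
      subst hb'
      rw [swap_eval_newl hℓ2 hℓ1] at hx
      rcases hv _ hx with ⟨a', heq, hne, -⟩ | ⟨b', heq, -⟩
      · rw [Sum.inl.injEq] at heq
        exact absurd (by rw [← heq] : a'.val = ℓ) (by omega)
      · simp at heq
    · rw [swap_eval_inr hℓ b hb] at hx
      rcases hv _ hx with ⟨a', heq, -⟩ | ⟨b', heq, hb'⟩
      · simp at heq
      · rw [Sum.inr.injEq] at heq
        have hval : b.val = b'.val := by rw [heq]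
        omega
  have gCross : ∀ (a : Fin (d+2)) (b : Fin (d+1)), a.val = b.val → ℓ < a.val →
      ¬(Sum.inl a ∈ G ∧ Sum.inr b ∈ G) := by
    intro a b hab h1 hmem
    obtain ⟨hm1, hm2⟩ := hmem
    rw [hG, mem_image_swap] at hm1 hm2
    rw [swap_eval_inl hℓ a (by omega)] at hm1
    rw [swap_eval_inr hℓ b (by omega)] at hm2
    exact hcr a b hab h1 ⟨hm1, hm2⟩
  by_cases hT : (Finset.univ.filter (fun b : Fin (d+1) => Sum.inr b ∈ G)).Nonempty
  · set b0 := (Finset.univ.filter (fun b : Fin (d+1) => Sum.inr b ∈ G)).min' hT with hb0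
    have hjG : Sum.inr b0 ∈ G :=
      (Finset.mem_filter.1 (Finset.min'_mem _ hT)).2
    have hℓj : ℓ < b0.val := gInr _ hjG
    have hmin : ∀ b : Fin (d+1), Sum.inr b ∈ G → b0.val ≤ b.val := by
      intro b hb
      exact Finset.min'_le _ b (Finset.mem_filter.2 ⟨Finset.mem_univ _, hb⟩)
    refine ⟨b0.val, hℓj, by omega, ⟨fun x hx => ?_, fun a b hab h1 => gCross a b hab (by omega)⟩⟩
    cases x with
    | inl a =>
        refine Or.inl ⟨a, rfl, fun haj => ?_, gInl a hx⟩
        exact gCross a b0 haj (by omega) ⟨hx, hjG⟩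
    | inr b => exact Or.inr ⟨b, rfl, hmin b hx⟩
  · refine ⟨d+1, by omega, le_refl _, ⟨fun x hx => ?_, fun a b hab h1 hmem => ?_⟩⟩
    · cases x with
      | inl a => exact Or.inl ⟨a, rfl, gInl a hx, gInl a hx⟩
      | inr b => exact absurd ⟨b, Finset.mem_filter.2 ⟨Finset.mem_univ _, hx⟩⟩ hT
    · exact absurd ⟨b, Finset.mem_filter.2 ⟨Finset.mem_univ _, hmem.2⟩⟩ hT

lemma memD_swap_ell_bwd {ℓ j : ℕ} (hℓ : ℓ ≤ d) (hj1 : ℓ < j) (hj2 : j ≤ d+1)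
    {F : Finset (V d)} (hF : memD d j F) :
    memD d ℓ (F.image (⇑(Equiv.swap (origV d ℓ) (newV d ℓ)))) := by
  have hℓ2 : ℓ < d + 2 := by omega
  have hℓ1 : ℓ < d + 1 := by omega
  unfold memD at hF ⊢
  obtain ⟨hv, hcr⟩ := hF
  constructor
  · intro x hx
    rw [mem_image_swap] at hx
    cases x with
    | inl a =>
        by_cases ha : a.val = ℓ
        · have ha' : a = (⟨ℓ, hℓ2⟩ : Fin (d+2)) := Fin.ext (show a.val = ℓ by omega)
          subst ha'
          rw [swap_eval_origl hℓ2 hℓ1] at hx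
          rcases hv _ hx with ⟨a', heq, -⟩ | ⟨b', heq, hjb⟩
          · simp at heq
          · rw [Sum.inr.injEq] at heq
            have hbv : b'.val = ℓ := by rw [← heq]
            exact absurd hbv (by omega)
        · rw [swap_eval_inl hℓ a ha] at hx
          rcases hv _ hx with ⟨a', heq, -, h2⟩ | ⟨b', heq, -⟩
          · rw [Sum.inl.injEq] at heq
            have hval : a.val = a'.val := by rw [heq]
            exact Or.inl ⟨a, rfl, ha, by omega⟩
          · simp at heq
    | inr b =>
        by_cases hb : b.val = ℓ
        · exact Or.inr ⟨b, rfl, by omega⟩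
        · rw [swap_eval_inr hℓ b hb] at hx
          rcases hv _ hx with ⟨a', heq, -⟩ | ⟨b', heq, hjb⟩
          · simp at heq
          · rw [Sum.inr.injEq] at heq
            have hval : b.val = b'.val := by rw [heq]
            exact Or.inr ⟨b, rfl, by omega⟩
  · intro a b hab h1 hmem
    obtain ⟨hm1, hm2⟩ := hmem
    rw [mem_image_swap] at hm1 hm2
    rw [swap_eval_inl hℓ a (by omega)] at hm1
    rw [swap_eval_inr hℓ b (by omega)] at hm2
    rcases Nat.lt_trichotomy a.val j with hlt | heqj | hgt
    · rcases hv _ hm2 with ⟨a', heq', -⟩ | ⟨b', heq', hjb⟩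
      · simp at heq'
      · rw [Sum.inr.injEq] at heq'
        have hval : b.val = b'.val := by rw [heq']
        omega
    · rcases hv _ hm1 with ⟨a', heq', hne, -⟩ | ⟨b', heq', -⟩
      · rw [Sum.inl.injEq] at heq'
        have hval : a.val = a'.val := by rw [heq']
        omega
      · simp at heq'
    · exact hcr a b hab (by omega) ⟨hm1, hm2⟩

end Stmt5Aux

/-- `⋄(Γ_{i_1},…,Γ_{i_k},Γ_ℓ) ≅ ⋄(Γ_{i_1},…,Γ_{i_k},Γ_{ℓ+1},…,Γ_{d+1})`
via the vertex map switching `ℓ` and `v_ℓ`. -/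
theorem stmt5 (d ℓ : ℕ) (S : Finset ℕ) (hS : S.Nonempty) (hℓ : ℓ ≤ d)
    (hlt : ∀ i ∈ S, i < ℓ) :
    ∀ F : Finset (V d),
      F ∈ DiamU d (insert ℓ S) ↔
        F.image (⇑(Equiv.swap (origV d ℓ) (newV d ℓ))) ∈
          DiamU d (S ∪ Finset.Ioc ℓ (d+1)) := by
  intro F
  have hd1 : ∀ i ∈ insert ℓ S, i ≤ d+1 := by
    intro i hi
    rcases Finset.mem_insert.1 hi with rfl | h
    · omega
    · have := hlt i h
      omega
  have hd2 : ∀ i ∈ S ∪ Finset.Ioc ℓ (d+1), i ≤ d+1 := by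
    intro i hi
    rcases Finset.mem_union.1 hi with h | h
    · have := hlt i h
      omega
    · exact (Finset.mem_Ioc.1 h).2
  rw [diamU_char _ hd1, diamU_char _ hd2]
  constructor
  · rintro ⟨i, hiI, hFi⟩
    rcases Finset.mem_insert.1 hiI with rfl | hiS
    · obtain ⟨j, hj1, hj2, hmem⟩ := memD_swap_ell_fwd hℓ hFi
      exact ⟨j, Finset.mem_union_right _ (Finset.mem_Ioc.2 ⟨hj1, hj2⟩), hmem⟩
    · exact ⟨i, Finset.mem_union_left _ hiS, memD_swap_lt (hlt i hiS) hℓ hFi⟩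
  · rintro ⟨j, hjI, hFj⟩
    rcases Finset.mem_union.1 hjI with hjS | hjIoc
    · refine ⟨j, Finset.mem_insert_of_mem hjS, ?_⟩
      have h := memD_swap_lt (hlt j hjS) hℓ hFj
      rwa [image_swap_swap] at h
    · rcases Finset.mem_Ioc.1 hjIoc with ⟨h1, h2⟩
      refine ⟨ℓ, Finset.mem_insert_self _ _, ?_⟩
      have h := memD_swap_ell_bwd hℓ h1 h2 hFj
      rwa [image_swap_swap] at h


end Paper
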